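/- Let n ≥ 1 and let A be an n-by-n reciprocal matrix. Then the characteristic polynomial of A equals ∏_{j=1}^{n} (X − 2cos(jπ/(n+1))); in particular, the spectrum of A is exactly {2cos(jπ/(n+1)) : j = 1, …, n}, and all n eigenvalues of A are simple. -/

import Mathlib

open Matrix Polynomial

/-- A tridiagonal complex matrix with zero main diagonal whose symmetric
off-diagonal entries have pairwise products equal to one. -/
def IsReciprocal {n : ℕ} (A : Matrix (Fin n) (Fin n) ℂ) : Prop :=
  (∀ i j : Fin n, ((i : ℤ) - (j : ℤ)) ^ 2 ≠ 1 → A i j = 0) ∧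
  ∀ i j : Fin n, (j : ℕ) = (i : ℕ) + 1 → A i j * A j i = 1

/-- Chebyshev-like recurrence polynomials. -/
noncomputable def recP : ℕ → Polynomial ℂ
  | 0 => 1
  | 1 => X
  | (k + 2) => X * recP (k + 1) - recP k

theorem recP_monic_natDegree : ∀ k, (recP k).Monic ∧ (recP k).natDegree = k
  | 0 => ⟨monic_one, natDegree_one⟩
  | 1 => ⟨monic_X, natDegree_X⟩
  | (k + 2) => by
    obtain ⟨h1m, h1d⟩ := recP_monic_natDegree (k + 1)
    obtain ⟨h0m, h0d⟩ := recP_monic_natDegree k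
    have hXm : (X * recP (k + 1)).Monic := monic_X.mul h1m
    have hXd : (X * recP (k + 1)).natDegree = k + 2 := by
      rw [natDegree_mul X_ne_zero h1m.ne_zero, natDegree_X, h1d]; ring
    have hdlt : (recP k).degree < (X * recP (k + 1)).degree := by
      rw [degree_eq_natDegree h0m.ne_zero, degree_eq_natDegree hXm.ne_zero, h0d, hXd]
      exact_mod_cast Nat.lt_succ_of_lt (Nat.lt_succ_self k)
    constructor
    · exact hXm.sub_of_left hdlt
    · show (X * recP (k + 1) - recP k).natDegree = k + 2
      rw [natDegree_sub_eq_left_of_natDegree_lt, hXd]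
      rw [h0d, hXd]; omega

theorem recP_eval (θ : ℂ) :
    ∀ k, (recP k).eval (2 * Complex.cos θ) * Complex.sin θ
      = Complex.sin ((k + 1) * θ)
  | 0 => by simp [recP]
  | 1 => by
    simp only [recP, eval_X]
    push_cast
    rw [show ((1 : ℂ) + 1) * θ = 2 * θ by ring, Complex.sin_two_mul]; ring
  | (k + 2) => by
    have h1 := recP_eval θ (k + 1)
    have h0 := recP_eval θ k
    simp only [recP, eval_sub, eval_mul, eval_X, sub_mul, mul_assoc, h1, h0]
    have e3 : ((k : ℂ) + 2 + 1) * θ = ((k + 1 + 1) * θ) + θ := by ring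
    have e1 : ((k : ℂ) + 1) * θ = ((k + 1 + 1) * θ) - θ := by ring
    push_cast
    rw [e3, e1, Complex.sin_add, Complex.sin_sub]
    ring

lemma isReciprocal_shift {m n : ℕ} (f : Fin m → Fin n) (c : ℕ)
    (hf : ∀ i : Fin m, (f i : ℕ) = (i : ℕ) + c)
    {A : Matrix (Fin n) (Fin n) ℂ} (hA : IsReciprocal A) :
    IsReciprocal (A.submatrix f f) := by
  constructor
  · intro i j h
    apply hA.1
    have hi := hf i; have hj := hf j
    have hkey : ((f i : ℤ) - (f j : ℤ)) = ((i : ℤ) - (j : ℤ)) := by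
      have e1 : ((f i : ℕ) : ℤ) = (i : ℕ) + c := by exact_mod_cast hi
      have e2 : ((f j : ℕ) : ℤ) = (j : ℕ) + c := by exact_mod_cast hj
      omega
    rw [hkey]; exact h
  · intro i j h
    apply hA.2
    rw [hf i, hf j, h]; ring

lemma charmatrix_submatrix_inj {m n : ℕ} (f : Fin m → Fin n)
    (hf : Function.Injective f) (A : Matrix (Fin n) (Fin n) ℂ) :
    (charmatrix A).submatrix f f = charmatrix (A.submatrix f f) := by
  ext i j
  by_cases h : i = j
  · subst h; simp
  · rw [Matrix.submatrix_apply,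
      charmatrix_apply_ne _ _ _ (fun hc => h (hf hc)),
      charmatrix_apply_ne _ _ _ h, Matrix.submatrix_apply]

lemma int_shift_sq_ne (a : ℤ) (h : 2 ≤ a ∨ a ≤ -2) : a ^ 2 ≠ 1 := by
  intro hc; rcases h with h | h <;> nlinarith

theorem charpoly_recP :
    ∀ n (A : Matrix (Fin n) (Fin n) ℂ), IsReciprocal A → A.charpoly = recP n
  | 0, A, _ => by
    simp [Matrix.charpoly, Matrix.det_isEmpty, recP]
  | 1, A, hA => by
    have h00 : A 0 0 = 0 := hA.1 0 0 (by norm_num)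
    simp [Matrix.charpoly, Matrix.det_fin_one, charmatrix_apply_eq, h00, recP]
  | (k + 2), A, hA => by
    set M := charmatrix A with hM
    -- the two principal submatrices
    have hsucc : ∀ i : Fin (k + 1), ((Fin.succ i : Fin (k + 2)) : ℕ) = (i : ℕ) + 1 :=
      fun i => rfl
    have hsucc2 : ∀ i : Fin k, ((Fin.succ (Fin.succ i) : Fin (k + 2)) : ℕ) = (i : ℕ) + 2 :=
      fun i => rfl
    have hA1 : IsReciprocal (A.submatrix Fin.succ Fin.succ) :=
      isReciprocal_shift Fin.succ 1 hsucc hA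
    have hA2 : IsReciprocal (A.submatrix (fun i : Fin k => i.succ.succ)
        (fun i : Fin k => i.succ.succ)) :=
      isReciprocal_shift _ 2 hsucc2 hA
    have hc1 := charpoly_recP (k + 1) _ hA1
    have hc0 := charpoly_recP k _ hA2
    -- entries of the first row
    have h01ne : (0 : Fin (k + 2)) ≠ 1 := by
      intro h; have := congrArg Fin.val h; simp [Fin.val_one] at this
    have hrow : ∀ j : Fin k, A 0 j.succ.succ = 0 := by
      intro j
      apply hA.1
      apply int_shift_sq_ne
      right
      simp only [Fin.val_succ, Fin.val_zero]
      push_cast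
      omega
    have hcol : ∀ i : Fin k, A i.succ.succ 0 = 0 := by
      intro i
      apply hA.1
      apply int_shift_sq_ne
      left
      simp only [Fin.val_succ, Fin.val_zero]
      push_cast
      omega
    have h00 : A 0 0 = 0 := hA.1 0 0 (by norm_num)
    have hprod : A 0 1 * A 1 0 = 1 := hA.2 0 1 (by simp [Fin.val_one])
    -- row expansion
    have hdet : M.det = ∑ j : Fin (k + 2), (-1) ^ (j : ℕ) * M 0 j *
        (M.submatrix Fin.succ j.succAbove).det := Matrix.det_succ_row_zero M
    rw [Fin.sum_univ_succ, Fin.sum_univ_succ] at hdet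
    have hzero : ∀ j : Fin k,
        (-1 : Polynomial ℂ) ^ ((j.succ.succ : Fin (k+2)) : ℕ) * M 0 j.succ.succ *
          (M.submatrix Fin.succ (j.succ.succ).succAbove).det = 0 := by
      intro j
      have hne : (0 : Fin (k + 2)) ≠ j.succ.succ := (Fin.succ_ne_zero _).symm
      rw [hM, charmatrix_apply_ne _ _ _ hne, hrow j]
      simp
    rw [Finset.sum_congr rfl (fun j _ => hzero j), Finset.sum_const_zero, add_zero] at hdet
    -- first term
    have hM00 : M 0 0 = X := by rw [hM, charmatrix_apply_eq, h00, map_zero, sub_zero]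
    have hminor0 : (M.submatrix Fin.succ ((0 : Fin (k+2)).succAbove)).det = recP (k + 1) := by
      rw [Fin.succAbove_zero, hM, charmatrix_submatrix_inj _ (Fin.succ_injective _),
        ← Matrix.charpoly, hc1]
    -- second term: expand the minor along its first column
    set N := M.submatrix Fin.succ ((1 : Fin (k+2)).succAbove) with hN
    have hN00 : N 0 0 = -C (A 1 0) := by
      have h10 : (1 : Fin (k+2)).succAbove 0 = 0 := by
        rw [Fin.succAbove_of_castSucc_lt]
        · rfl
        · rw [Fin.lt_def]
          simp [Fin.val_one]
      rw [hN, Matrix.submatrix_apply, h10, hM,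
        charmatrix_apply_ne _ _ _ (Fin.succ_ne_zero _)]
      rfl
    have hNi0 : ∀ i : Fin k, N i.succ 0 = 0 := by
      intro i
      have h10 : (1 : Fin (k+2)).succAbove 0 = 0 := by
        rw [Fin.succAbove_of_castSucc_lt]
        · rfl
        · rw [Fin.lt_def]; simp [Fin.val_one]
      rw [hN, Matrix.submatrix_apply, h10, hM,
        charmatrix_apply_ne _ _ _ (Fin.succ_ne_zero _), hcol i, map_zero, neg_zero]
    have hNminor : (N.submatrix ((0 : Fin (k+1)).succAbove) Fin.succ).det = recP k := by
      have hcols : ((1 : Fin (k+2)).succAbove ∘ Fin.succ) =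
          (fun j : Fin k => j.succ.succ) := by
        funext j
        simp only [Function.comp_apply]
        rw [Fin.succAbove_of_le_castSucc]
        rw [Fin.le_def]
        simp [Fin.val_one]
      have hrows : (Fin.succ ∘ Fin.succ : Fin k → Fin (k + 2)) =
          (fun i : Fin k => i.succ.succ) := rfl
      rw [hN, Fin.succAbove_zero, Matrix.submatrix_submatrix, hcols, hM, hrows,
        charmatrix_submatrix_inj _ (by
          intro a b hab
          have : (a : ℕ) + 2 = (b : ℕ) + 2 := by
            have := congrArg Fin.val hab
            simpa using this
          exact Fin.ext (by omega)),
        ← Matrix.charpoly, hc0]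
    have hdetN : N.det = -C (A 1 0) * recP k := by
      have := Matrix.det_succ_column_zero N
      rw [Fin.sum_univ_succ] at this
      rw [this, hN00]
      have : ∀ i : Fin k, (-1 : Polynomial ℂ) ^ ((i.succ : Fin (k+1)) : ℕ) * N i.succ 0 *
          (N.submatrix (i.succ).succAbove Fin.succ).det = 0 := by
        intro i; rw [hNi0 i]; ring
      rw [Finset.sum_congr rfl (fun i _ => this i), Finset.sum_const_zero, add_zero,
        hNminor]
      simp
    have hM01 : M 0 1 = -C (A 0 1) := by
      rw [hM, charmatrix_apply_ne _ _ _ h01ne]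
    have h1 : (Fin.succ 0 : Fin (k + 2)) = 1 := rfl
    rw [h1] at hdet
    have hCprod : C (A 0 1) * C (A 1 0) = 1 := by
      rw [← C_mul, hprod, C_1]
    rw [Matrix.charpoly]
    show M.det = recP (k + 2)
    rw [hdet, hM00, hM01, hminor0, ← hN, hdetN, Fin.val_zero, Fin.val_one, recP]
    linear_combination (-(recP k)) * hCprod

theorem charpoly_spectrum_of_isReciprocal {n : ℕ} (hn : 1 ≤ n)
    (A : Matrix (Fin n) (Fin n) ℂ) (hA : IsReciprocal A) :
    A.charpoly =
      ∏ j ∈ Finset.Icc 1 n,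
        (Polynomial.X -
          Polynomial.C ((2 * Real.cos (j * Real.pi / (n + 1)) : ℝ) : ℂ)) ∧
    spectrum ℂ A =
      {z : ℂ | ∃ j ∈ Finset.Icc 1 n,
        z = ((2 * Real.cos (j * Real.pi / (n + 1)) : ℝ) : ℂ)} ∧
    ∀ z : ℂ, A.charpoly.rootMultiplicity z ≤ 1 := by
  classical
  set r : ℕ → ℂ := fun j => ((2 * Real.cos (j * Real.pi / (n + 1)) : ℝ) : ℂ) with hr
  set q : Polynomial ℂ := ∏ j ∈ Finset.Icc 1 n, (X - C (r j)) with hq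
  -- injectivity of r on Icc 1 n
  have hθmem : ∀ j ∈ Finset.Icc 1 n, (j : ℝ) * Real.pi / (n + 1) ∈ Set.Icc 0 Real.pi := by
    intro j hj
    rw [Finset.mem_Icc] at hj
    have hπ := Real.pi_pos
    constructor
    · positivity
    · rw [div_le_iff₀ (by positivity)]
      have hj2 : (j : ℝ) ≤ n := by exact_mod_cast hj.2
      nlinarith
  have hinj : ∀ j₁ ∈ Finset.Icc 1 n, ∀ j₂ ∈ Finset.Icc 1 n, r j₁ = r j₂ → j₁ = j₂ := by
    intro j₁ h₁ j₂ h₂ hrr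
    have hπ := Real.pi_pos
    simp only [hr] at hrr
    have : (2 * Real.cos ((j₁ : ℝ) * Real.pi / ((n : ℝ) + 1)) : ℝ) =
        2 * Real.cos ((j₂ : ℝ) * Real.pi / ((n : ℝ) + 1)) := by
      exact_mod_cast hrr
    have hcos : Real.cos ((j₁ : ℝ) * Real.pi / (n + 1)) =
        Real.cos ((j₂ : ℝ) * Real.pi / (n + 1)) := by linarith
    have := Real.injOn_cos (hθmem j₁ h₁) (hθmem j₂ h₂) hcos
    have hne : (n : ℝ) + 1 ≠ 0 := by positivity
    field_simp at this
    exact_mod_cast this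
  -- roots of recP n
  have hroot : ∀ j ∈ Finset.Icc 1 n, (recP n).eval (r j) = 0 := by
    intro j hj
    rw [Finset.mem_Icc] at hj
    have hπ := Real.pi_pos
    set θR : ℝ := (j : ℝ) * Real.pi / (n + 1) with hθR
    have hrj : r j = 2 * Complex.cos (θR : ℂ) := by
      rw [hr]
      push_cast [← Complex.ofReal_cos]
      ring
    have key := recP_eval (θR : ℂ) n
    rw [← hrj] at key
    have hsum : ((n : ℂ) + 1) * (θR : ℂ) = ((j : ℝ) * Real.pi : ℝ) := by
      have hne : (n : ℂ) + 1 ≠ 0 := by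
        exact_mod_cast (Nat.cast_add_one_ne_zero n : ((n : ℂ) + 1) ≠ 0)
      push_cast [hθR]
      field_simp
    rw [hsum] at key
    have hz : Complex.sin (((j : ℝ) * Real.pi : ℝ) : ℂ) = 0 := by
      rw [← Complex.ofReal_sin]
      exact_mod_cast congrArg (Complex.ofReal) (Real.sin_nat_mul_pi j)
    have hsne : Complex.sin (θR : ℂ) ≠ 0 := by
      rw [← Complex.ofReal_sin]
      have h0 : 0 < θR := by
        rw [hθR]
        have : (1 : ℝ) ≤ (j : ℝ) := by exact_mod_cast hj.1
        positivity
      have hlt : θR < Real.pi := by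
        rw [hθR, div_lt_iff₀ (by positivity)]
        have hj2 : (j : ℝ) ≤ n := by exact_mod_cast hj.2
        nlinarith
      exact_mod_cast Complex.ofReal_ne_zero.mpr (Real.sin_pos_of_pos_of_lt_pi h0 hlt).ne'
    rw [hz] at key
    exact (mul_eq_zero.mp key).resolve_right hsne
  -- q is monic of degree n
  have hqm : q.Monic := monic_prod_of_monic _ _ (fun j _ => monic_X_sub_C (r j))
  have hqd : q.natDegree = n := by
    rw [hq, natDegree_prod _ _ (fun j _ => X_sub_C_ne_zero (r j))]
    simp [natDegree_X_sub_C, Nat.card_Icc]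
  obtain ⟨hpm, hpd⟩ := recP_monic_natDegree n
  -- recP n = q
  have hPq : recP n = q := by
    by_contra hne
    have hsub : recP n - q ≠ 0 := sub_ne_zero.mpr hne
    have hdeg : (recP n - q).natDegree < n := by
      have hd : (recP n - q).degree < (recP n).degree := by
        apply degree_sub_lt
        · rw [degree_eq_natDegree hpm.ne_zero, degree_eq_natDegree hqm.ne_zero, hpd, hqd]
        · exact hpm.ne_zero
        · rw [hpm.leadingCoeff, hqm.leadingCoeff]
      rw [degree_eq_natDegree hpm.ne_zero, hpd] at hd
      exact (natDegree_lt_iff_degree_lt hsub).mpr hd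
    apply hsub
    apply eq_zero_of_natDegree_lt_card_of_eval_eq_zero' _ ((Finset.Icc 1 n).image r)
    · intro z hz
      rw [Finset.mem_image] at hz
      obtain ⟨j, hj, rfl⟩ := hz
      rw [eval_sub, hroot j hj, hq]
      rw [eval_prod]
      rw [Finset.prod_eq_zero hj (by simp)]
      ring
    · rwa [Finset.card_image_of_injOn (fun a ha b hb => hinj a ha b hb), Nat.card_Icc,
        Nat.add_sub_cancel]
  have hcp : A.charpoly = q := (charpoly_recP n A hA).trans hPq
  have hcp' : A.charpoly =
      ∏ j ∈ Finset.Icc 1 n,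
        (X - C ((2 * Real.cos (j * Real.pi / (n + 1)) : ℝ) : ℂ)) := hcp
  refine ⟨hcp', ?_, ?_⟩
  · -- spectrum
    have keyEval : ∀ z : ℂ, A.charpoly.eval z = (Matrix.scalar (Fin n) z - A).det := by
      intro z
      rw [Matrix.charpoly, ← coe_evalRingHom, RingHom.map_det]
      congr 1
      ext i j
      by_cases h : i = j
      · subst h
        simp [charmatrix_apply_eq, Matrix.scalar_apply]
      · simp [charmatrix_apply_ne _ _ _ h, Matrix.scalar_apply,
          Matrix.diagonal_apply_ne _ h, Matrix.map_apply]
    ext z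
    rw [Set.mem_setOf_eq, spectrum.mem_iff]
    have halg : algebraMap ℂ (Matrix (Fin n) (Fin n) ℂ) z = Matrix.scalar (Fin n) z := rfl
    rw [halg]
    constructor
    · intro h
      have hdet0 : (Matrix.scalar (Fin n) z - A).det = 0 := by
        by_contra hd
        exact h ((Matrix.isUnit_iff_isUnit_det _).mpr (isUnit_iff_ne_zero.mpr hd))
      have heval : A.charpoly.eval z = 0 := by rw [keyEval]; exact hdet0
      rw [hcp, hq, eval_prod] at heval
      obtain ⟨j, hj, hz⟩ := Finset.prod_eq_zero_iff.mp heval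
      refine ⟨j, hj, ?_⟩
      rw [eval_sub, eval_X, eval_C, sub_eq_zero] at hz
      exact hz
    · rintro ⟨j, hj, rfl⟩
      intro hu
      have hd := isUnit_iff_ne_zero.mp ((Matrix.isUnit_iff_isUnit_det _).mp hu)
      apply hd
      rw [← keyEval, hcp, hq, eval_prod]
      exact Finset.prod_eq_zero hj
        (by simp only [hr, eval_sub, eval_X, eval_C, sub_self])
  · -- simple roots
    intro z
    rw [hcp, hq]
    exact rootMultiplicity_le_one_of_separable
      (separable_prod_X_sub_C_iff'.mpr hinj) z
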